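/- For every δ > 0 there exists a frog-strategy S such that Succ(S, A_{fin}) ≥ 1 − δ, where A_{fin} := {b ∈ {0,1}^ω : Σ_{i≥1} b_i < ∞} is the set of sequences containing only finitely many 1s. -/

import Mathlib

/-- A frog-strategy: for each infinite binary sequence `b` (0-indexed: `b i` is bit `b_{i+1}`),
a probability distribution on `ℕ ∪ {∞}`, where `some i` means "cross at minute `i+1`" and
`none` means "wait forever".  The distribution at minute `i+1` may depend only on the
first `i` bits of `b`. -/
structure FrogStrategy where
  prob : (ℕ → Bool) → Option ℕ → ℝ
  nonneg : ∀ b o, 0 ≤ prob b o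
  total : ∀ b, ∑' o : Option ℕ, prob b o = 1
  adapted : ∀ b b' : ℕ → Bool, ∀ i : ℕ,
    (∀ j, j < i → b j = b' j) → prob b (some i) = prob b' (some i)

/-- Success probability: total probability of crossing at a minute with no car. -/
noncomputable def succProb (S : FrogStrategy) (b : ℕ → Bool) : ℝ :=
  ∑' i : ℕ, if b i = false then S.prob b (some i) else 0

/-- Death probability: total probability of crossing at a minute with a car. -/
noncomputable def deathProb (S : FrogStrategy) (b : ℕ → Bool) : ℝ :=
  ∑' i : ℕ, if b i = true then S.prob b (some i) else 0

/-- `cars b t` is `N_t(b) = b_1 + ⋯ + b_t`, the number of cars among the first `t` minutes. -/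
def cars (b : ℕ → Bool) (t : ℕ) : ℕ :=
  ((Finset.range t).filter (fun i => b i = true)).card

/-- `b` is `ε`-weakly sparse if `lim_{s→∞} inf_{t ≥ s} N_t(b)/t ≤ ε`. -/
def epsWeaklySparse (ε : ℝ) (b : ℕ → Bool) : Prop :=
  Filter.liminf (fun t : ℕ => (cars b t : ℝ) / t) Filter.atTop ≤ ε


noncomputable def frogHaz (c : ℝ) (b : ℕ → Bool) (i : ℕ) : ℝ := c / 2 ^ (cars b i + 1)

noncomputable def frogMass (c : ℝ) (b : ℕ → Bool) (i : ℕ) : ℝ :=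
  (∏ j ∈ Finset.range i, (1 - frogHaz c b j)) * frogHaz c b i

lemma frogHaz_pos {c : ℝ} (hc : 0 < c) (b : ℕ → Bool) (i : ℕ) : 0 < frogHaz c b i :=
  div_pos hc (by positivity)

lemma frogHaz_le_half {c : ℝ} (hc1 : c ≤ 1) (b : ℕ → Bool) (i : ℕ) :
    frogHaz c b i ≤ 1 / 2 := by
  unfold frogHaz
  apply div_le_div₀ (by norm_num) hc1 (by norm_num)
  calc (2:ℝ) = 2 ^ 1 := by norm_num
  _ ≤ 2 ^ (cars b i + 1) := by
      apply pow_le_pow_right₀ (by norm_num); omega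

lemma frogProd_nonneg {c : ℝ} (hc1 : c ≤ 1) (b : ℕ → Bool) (n : ℕ) :
    0 ≤ ∏ j ∈ Finset.range n, (1 - frogHaz c b j) := by
  apply Finset.prod_nonneg
  intro j _
  have := frogHaz_le_half hc1 b j
  linarith

lemma frogProd_le_one {c : ℝ} (hc : 0 < c) (hc1 : c ≤ 1) (b : ℕ → Bool) (n : ℕ) :
    ∏ j ∈ Finset.range n, (1 - frogHaz c b j) ≤ 1 := by
  apply Finset.prod_le_one
  · intro j _; have := frogHaz_le_half hc1 b j; linarith
  · intro j _; have := frogHaz_pos hc b j; linarith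

lemma frogMass_nonneg {c : ℝ} (hc : 0 < c) (hc1 : c ≤ 1) (b : ℕ → Bool) (i : ℕ) :
    0 ≤ frogMass c b i :=
  mul_nonneg (frogProd_nonneg hc1 b i) (frogHaz_pos hc b i).le

lemma frogMass_le_haz {c : ℝ} (hc : 0 < c) (hc1 : c ≤ 1) (b : ℕ → Bool) (i : ℕ) :
    frogMass c b i ≤ frogHaz c b i := by
  unfold frogMass
  nth_rewrite 2 [← one_mul (frogHaz c b i)]
  exact mul_le_mul_of_nonneg_right (frogProd_le_one hc hc1 b i) (frogHaz_pos hc b i).le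

lemma frog_sum_mass (c : ℝ) (b : ℕ → Bool) (n : ℕ) :
    ∑ i ∈ Finset.range n, frogMass c b i
      = 1 - ∏ j ∈ Finset.range n, (1 - frogHaz c b j) := by
  induction n with
  | zero => simp
  | succ n ih => rw [Finset.sum_range_succ, ih, Finset.prod_range_succ, frogMass]; ring

lemma frogMass_summable {c : ℝ} (hc : 0 < c) (hc1 : c ≤ 1) (b : ℕ → Bool) :
    Summable (frogMass c b) := by
  apply summable_of_sum_range_le (c := 1) (fun i => frogMass_nonneg hc hc1 b i)
  intro n
  rw [frog_sum_mass]
  have := frogProd_nonneg hc1 b n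
  linarith

lemma frogMass_tsum_le_one {c : ℝ} (hc : 0 < c) (hc1 : c ≤ 1) (b : ℕ → Bool) :
    ∑' i, frogMass c b i ≤ 1 := by
  apply Real.tsum_le_of_sum_range_le (fun i => frogMass_nonneg hc hc1 b i)
  intro n
  rw [frog_sum_mass]
  have := frogProd_nonneg hc1 b n
  linarith

lemma cars_congr {b b' : ℕ → Bool} {t : ℕ} (h : ∀ j, j < t → b j = b' j) :
    cars b t = cars b' t := by
  unfold cars
  congr 1
  apply Finset.filter_congr
  intro j hj
  rw [h j (Finset.mem_range.mp hj)]

lemma cars_mono (b : ℕ → Bool) : Monotone (cars b) := by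
  intro s t hst
  apply Finset.card_le_card
  apply Finset.filter_subset_filter
  exact Finset.range_subset_range.mpr hst

lemma cars_succ_of_true {b : ℕ → Bool} {i : ℕ} (h : b i = true) :
    cars b (i + 1) = cars b i + 1 := by
  unfold cars
  rw [Finset.range_add_one, Finset.filter_insert, if_pos h,
    Finset.card_insert_of_notMem (by simp)]

lemma cars_lt_cars {b : ℕ → Bool} {i j : ℕ} (h : b i = true) (hij : i < j) :
    cars b i < cars b j := by
  have h1 := cars_succ_of_true h
  have h2 := cars_mono b (show i + 1 ≤ j from hij)
  omega

lemma frogMass_hasSum_one {c : ℝ} (hc : 0 < c) (hc1 : c ≤ 1) {b : ℕ → Bool}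
    (hb : {i : ℕ | b i = true}.Finite) : HasSum (frogMass c b) 1 := by
  -- choose N beyond all cars
  obtain ⟨m, hm⟩ := hb.bddAbove
  set N := m + 1 with hN
  have hNfalse : ∀ i, N ≤ i → b i = false := by
    intro i hi
    by_contra h
    have : b i = true := by simpa using h
    have := hm this
    omega
  -- cars constant from N on
  have hcars : ∀ j, N ≤ j → cars b j = cars b N := by
    intro j hj
    unfold cars
    congr 1
    apply Finset.ext
    intro i
    simp only [Finset.mem_filter, Finset.mem_range]
    constructor
    · rintro ⟨hij, hbi⟩
      refine ⟨?_, hbi⟩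
      by_contra h
      have := hNfalse i (by omega)
      simp [this] at hbi
    · rintro ⟨hiN, hbi⟩
      exact ⟨by omega, hbi⟩
  set a := frogHaz c b N with ha_def
  have ha0 : 0 < a := frogHaz_pos hc b N
  have ha1 : a < 1 := lt_of_le_of_lt (frogHaz_le_half hc1 b N) (by norm_num)
  have hhaz : ∀ j, N ≤ j → frogHaz c b j = a := by
    intro j hj
    rw [ha_def]
    unfold frogHaz
    rw [hcars j hj]
  -- product bound
  have hPle : ∀ n, N ≤ n → ∏ j ∈ Finset.range n, (1 - frogHaz c b j) ≤ (1 - a) ^ (n - N) := by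
    intro n hn
    rw [← Finset.prod_range_mul_prod_Ico _ hn]
    have h1 : ∏ j ∈ Finset.Ico N n, (1 - frogHaz c b j) = (1 - a) ^ (n - N) := by
      rw [Finset.prod_congr rfl (fun j hj => by
        rw [hhaz j (Finset.mem_Ico.mp hj).1]), Finset.prod_const, Nat.card_Ico]
    rw [h1]
    nth_rewrite 2 [← one_mul ((1 - a) ^ (n - N))]
    apply mul_le_mul_of_nonneg_right (frogProd_le_one hc hc1 b N)
    have : (0:ℝ) ≤ 1 - a := by linarith
    positivity
  -- product tends to 0
  have hP0 : Filter.Tendsto (fun n => ∏ j ∈ Finset.range n, (1 - frogHaz c b j))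
      Filter.atTop (nhds 0) := by
    have hgeo : Filter.Tendsto (fun n : ℕ => (1 - a) ^ (n - N)) Filter.atTop (nhds 0) := by
      apply (tendsto_pow_atTop_nhds_zero_of_lt_one (by linarith) (by linarith)).comp
      exact Filter.tendsto_atTop_atTop.mpr (fun k => ⟨k + N, fun n hn => by omega⟩)
    apply squeeze_zero' (Filter.Eventually.of_forall (fun n => frogProd_nonneg hc1 b n))
      _ hgeo
    filter_upwards [Filter.eventually_ge_atTop N] with n hn
    exact hPle n hn
  rw [hasSum_iff_tendsto_nat_of_nonneg (frogMass_nonneg hc hc1 b) 1]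
  simp only [frog_sum_mass]
  have := Filter.Tendsto.const_sub (1 : ℝ) hP0
  simpa using this

/-- Puzzle 1: for every `δ > 0` there is a frog-strategy succeeding with probability
`≥ 1 - δ` on every car-stream containing only finitely many cars,
i.e. `Succ(S, A_{fin}) ≥ 1 - δ`. -/
theorem puzzle1 (δ : ℝ) (hδ : 0 < δ) :
    ∃ S : FrogStrategy, ∀ b : ℕ → Bool,
      {i : ℕ | b i = true}.Finite → 1 - δ ≤ succProb S b := by
  set c := min δ 1 with hc_def
  have hc : 0 < c := lt_min hδ one_pos
  have hc1 : c ≤ 1 := min_le_right _ _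
  have hcδ : c ≤ δ := min_le_left _ _
  refine ⟨⟨fun b o => o.elim (1 - ∑' i, frogMass c b i) (frogMass c b), ?_, ?_, ?_⟩, ?_⟩
  · rintro b (_|i)
    · simp only [Option.elim]
      have := frogMass_tsum_le_one hc hc1 b
      linarith
    · exact frogMass_nonneg hc hc1 b i
  · intro b
    set T := ∑' i, frogMass c b i with hT
    have hsumm := frogMass_summable hc hc1 b
    have h2 : HasSum (fun o : Option ℕ =>
        if o = none then 0 else o.elim (1 - T) (frogMass c b)) T := by
      rw [← (Option.some_injective ℕ).hasSum_iff (f := fun o : Option ℕ =>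
        if o = none then 0 else o.elim (1 - T) (frogMass c b))]
      · have heq : ((fun o : Option ℕ =>
            if o = none then 0 else o.elim (1 - T) (frogMass c b)) ∘ some)
            = frogMass c b := by
          funext n; simp
        rw [heq]
        exact hsumm.hasSum
      · intro x hx
        cases x with
        | none => simp
        | some n => exact absurd ⟨n, rfl⟩ hx
    have h1 : HasSum (fun o : Option ℕ => if o = none then (1 - T) else 0) (1 - T) :=
      hasSum_ite_eq none (1 - T)
    have htot := h1.add h2
    have heq : (fun o : Option ℕ => (if o = none then (1 - T) else 0)
        + (if o = none then 0 else o.elim (1 - T) (frogMass c b)))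
        = fun o : Option ℕ => o.elim (1 - T) (frogMass c b) := by
      funext o
      cases o <;> simp
    rw [heq] at htot
    have : (1 - T) + T = 1 := by ring
    rw [this] at htot
    exact htot.tsum_eq
  · intro b b' i h
    have hh : ∀ j, j ≤ i → frogHaz c b j = frogHaz c b' j := by
      intro j hj
      unfold frogHaz
      rw [cars_congr (fun l hl => h l (by omega))]
    show frogMass c b i = frogMass c b' i
    unfold frogMass
    rw [hh i le_rfl,
      Finset.prod_congr rfl (fun j hj => by rw [hh j (Finset.mem_range.mp hj).le])]
  · intro b hb
    have hsumm := frogMass_summable hc hc1 b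
    have hone : ∑' i, frogMass c b i = 1 := (frogMass_hasSum_one hc hc1 hb).tsum_eq
    set sf : ℕ → ℝ := fun i => if b i = false then frogMass c b i else 0 with hsf
    set df : ℕ → ℝ := fun i => if b i = true then frogMass c b i else 0 with hdf
    have hsf_nonneg : ∀ i, 0 ≤ sf i := by
      intro i; rw [hsf]; dsimp only
      split
      · exact frogMass_nonneg hc hc1 b i
      · exact le_rfl
    have hdf_nonneg : ∀ i, 0 ≤ df i := by
      intro i; rw [hdf]; dsimp only
      split
      · exact frogMass_nonneg hc hc1 b i
      · exact le_rfl
    have hsf_le : ∀ i, sf i ≤ frogMass c b i := by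
      intro i; rw [hsf]; dsimp only
      split
      · exact le_rfl
      · exact frogMass_nonneg hc hc1 b i
    have hdf_le : ∀ i, df i ≤ frogMass c b i := by
      intro i; rw [hdf]; dsimp only
      split
      · exact le_rfl
      · exact frogMass_nonneg hc hc1 b i
    have hs_summ : Summable sf := Summable.of_nonneg_of_le hsf_nonneg hsf_le hsumm
    have hd_summ : Summable df := Summable.of_nonneg_of_le hdf_nonneg hdf_le hsumm
    have hsplit : ∀ i, frogMass c b i = sf i + df i := by
      intro i
      rw [hsf, hdf]; dsimp only
      cases hbi : b i <;> simp [hbi]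
    have hsum_split : (1:ℝ) = (∑' i, sf i) + ∑' i, df i := by
      rw [← hone, ← Summable.tsum_add hs_summ hd_summ]
      exact tsum_congr hsplit
    -- bound the death part
    set F := hb.toFinset with hF
    have hdeq : ∑' i, df i = ∑ i ∈ F, df i := by
      apply tsum_eq_sum
      intro i hi
      rw [hdf]; dsimp only
      rw [if_neg (by simpa [hF, Set.Finite.mem_toFinset] using hi)]
    have hinj : ∀ x ∈ F, ∀ y ∈ F, cars b x = cars b y → x = y := by
      intro x hx y hy hxy
      rw [hF, Set.Finite.mem_toFinset] at hx hy
      by_contra hne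
      rcases Nat.lt_or_ge x y with h | h
      · exact absurd hxy (ne_of_lt (cars_lt_cars hx h))
      · have hyx : y < x := by omega
        exact absurd hxy.symm (ne_of_lt (cars_lt_cars hy hyx))
    have hgs : Summable (fun k : ℕ => c / 2 ^ (k + 1)) := by
      have heq2 : (fun k : ℕ => c / 2 ^ (k + 1)) = fun k : ℕ => (c / 2) * (1 / 2 : ℝ) ^ k := by
        funext k
        rw [pow_succ]
        field_simp
        rw [← mul_pow]; norm_num
      rw [heq2]
      exact (summable_geometric_of_lt_one (by norm_num) (by norm_num)).mul_left _
    have hgt : ∑' k : ℕ, c / 2 ^ (k + 1) = c := by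
      have heq2 : (fun k : ℕ => c / 2 ^ (k + 1)) = fun k : ℕ => (c / 2) * (1 / 2 : ℝ) ^ k := by
        funext k
        rw [pow_succ]
        field_simp
        rw [← mul_pow]; norm_num
      rw [heq2, tsum_mul_left, tsum_geometric_of_lt_one (by norm_num) (by norm_num)]
      norm_num
    have hdle : ∑ i ∈ F, df i ≤ c := by
      calc ∑ i ∈ F, df i ≤ ∑ i ∈ F, frogHaz c b i := by
            apply Finset.sum_le_sum
            intro i _
            exact le_trans (hdf_le i) (frogMass_le_haz hc hc1 b i)
        _ = ∑ i ∈ F, c / 2 ^ (cars b i + 1) := rfl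
        _ = ∑ k ∈ F.image (fun i => cars b i), c / 2 ^ (k + 1) :=
            (Finset.sum_image (f := fun k : ℕ => c / 2 ^ (k + 1)) hinj).symm
        _ ≤ ∑' k : ℕ, c / 2 ^ (k + 1) := by
            apply Summable.sum_le_tsum
            · intro k _
              positivity
            · exact hgs
        _ = c := hgt
    have hdge : ∑' i, df i ≤ c := by rw [hdeq]; exact hdle
    show 1 - δ ≤ ∑' i, sf i
    linarith [hsum_split, hdge]
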